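/- Let G be a simple graph on a finite vertex type with G.IsSRGWith n k 0 1 and 2 ≤ n (a strongly regular Moore graph, of girth 5). Then E(G) = E(Gᶜ) if and only if n = 5 and k = 2 (i.e. G is the pentagon C₅). -/

import Mathlib

open Finset

/-- The adjacency matrix of a simple graph over `ℝ` is Hermitian. -/
lemma adjMatrix_isHermitian {V : Type*} [Fintype V] (G : SimpleGraph V) [DecidableRel G.Adj] :
    (G.adjMatrix ℝ).IsHermitian := by
  rw [Matrix.IsHermitian, Matrix.conjTranspose_eq_transpose_of_trivial]
  exact G.isSymm_adjMatrix

/-- The eigenvalues (with multiplicity) of the real adjacency matrix of a simple graph. -/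
noncomputable def adjEig {V : Type*} [Fintype V] [DecidableEq V] (G : SimpleGraph V) : V → ℝ := by
  classical
  exact (adjMatrix_isHermitian G).eigenvalues

/-- The energy of a graph : the sum of the absolute values of its adjacency eigenvalues. -/
noncomputable def energy {V : Type*} [Fintype V] [DecidableEq V] (G : SimpleGraph V) : ℝ :=
  ∑ i, |adjEig G i|

/-- The characteristic polynomial of the real adjacency matrix of a simple graph. -/
noncomputable def charpolyOf {V : Type*} [Fintype V] [DecidableEq V] (G : SimpleGraph V) :
    Polynomial ℝ := by
  classical
  exact (G.adjMatrix ℝ).charpoly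

section Aux

open Matrix

lemma eigen_congr {V : Type*} [Fintype V] [DecidableEq V] {A B : Matrix V V ℝ}
    (hA : A.IsHermitian) (hB : B.IsHermitian) (hAB : A = B) :
    hA.eigenvalues = hB.eigenvalues := by subst hAB; rfl

lemma eig_root {V : Type*} [Fintype V] [DecidableEq V] {A : Matrix V V ℝ} (hA : A.IsHermitian)
    {K c : ℝ} (hcubic : (A - K • (1 : Matrix V V ℝ)) * (A * A + A - c • 1) = 0) (i : V) :
    (hA.eigenvalues i - K) * (hA.eigenvalues i * hA.eigenvalues i + hA.eigenvalues i - c) = 0 := by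
  set μ := hA.eigenvalues i with hμ
  have hv := hA.mulVec_eigenvectorBasis i
  set v : V → ℝ := ⇑(hA.eigenvectorBasis i) with hvdef
  have hv0 : v ≠ 0 := by
    intro h0
    exact hA.eigenvectorBasis.orthonormal.ne_zero i (by ext x; exact congrFun h0 x)
  have h2 : (A * A) *ᵥ v = (μ * μ) • v := by
    rw [← mulVec_mulVec, hv, mulVec_smul, hv, smul_smul]
  have hw : (A * A + A - c • (1 : Matrix V V ℝ)) *ᵥ v = (μ * μ + μ - c) • v := by
    rw [sub_mulVec, add_mulVec, h2, hv, smul_mulVec, one_mulVec]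
    ext x; simp [Pi.smul_apply]; ring
  have h3 : ((A - K • (1 : Matrix V V ℝ)) * (A * A + A - c • 1)) *ᵥ v
      = ((μ - K) * (μ * μ + μ - c)) • v := by
    rw [← mulVec_mulVec, hw, mulVec_smul, sub_mulVec, hv, smul_mulVec, one_mulVec]
    ext x; simp [Pi.smul_apply]; ring
  rw [hcubic, zero_mulVec] at h3
  rcases smul_eq_zero.mp h3.symm with h | h
  · exact h
  · exact absurd h hv0

lemma eig_zero {V : Type*} [Fintype V] [DecidableEq V] {A : Matrix V V ℝ} (hA : A.IsHermitian)
    (h0 : A = 0) (i : V) : hA.eigenvalues i = 0 := by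
  subst h0
  have hv := hA.mulVec_eigenvectorBasis i
  rw [zero_mulVec] at hv
  rcases smul_eq_zero.mp hv.symm with h | h
  · exact h
  · exact absurd h (fun hc => hA.eigenvectorBasis.orthonormal.ne_zero i
      (by ext x; exact congrFun hc x))

lemma sum_eig {V : Type*} [Fintype V] [DecidableEq V] {A : Matrix V V ℝ} (hA : A.IsHermitian) :
    ∑ i, hA.eigenvalues i = A.trace := by
  conv_rhs => rw [hA.spectral_theorem, Unitary.conjStarAlgAut_apply]
  rw [Matrix.trace_mul_comm, ← mul_assoc, Unitary.coe_star_mul_self, one_mul, trace_diagonal]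
  simp

lemma sum_eig_sq {V : Type*} [Fintype V] [DecidableEq V] {A : Matrix V V ℝ} (hA : A.IsHermitian) :
    ∑ i, hA.eigenvalues i * hA.eigenvalues i = (A * A).trace := by
  conv_rhs => rw [hA.spectral_theorem, Unitary.conjStarAlgAut_apply]
  set U := (hA.eigenvectorUnitary : Matrix V V ℝ)
  set D := diagonal (RCLike.ofReal ∘ hA.eigenvalues : V → ℝ)
  have hU : star U * U = 1 := Unitary.coe_star_mul_self _
  have h1 : U * D * star U * (U * D * star U) = U * (D * D) * star U := by
    simp only [mul_assoc]
    rw [← mul_assoc (star U) U, hU, one_mul]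
  rw [h1, Matrix.trace_mul_comm, ← mul_assoc, hU, one_mul]
  have h2 : D * D = diagonal (fun i => hA.eigenvalues i * hA.eigenvalues i) := by
    rw [show D = diagonal (RCLike.ofReal ∘ hA.eigenvalues : V → ℝ) from rfl,
      diagonal_mul_diagonal]
    congr 1
  rw [h2, trace_diagonal]

lemma sum_abs_eig {V : Type*} [Fintype V] [DecidableEq V] {A : Matrix V V ℝ}
    (hA : A.IsHermitian) {K c t : ℝ}
    (hc : 0 ≤ c) (ht : t * t = 4 * c + 1) (ht1 : 1 ≤ t) (hK : 0 ≤ K)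
    (hD : K * K + K - c ≠ 0)
    (hcubic : (A - K • (1 : Matrix V V ℝ)) * (A * A + A - c • 1) = 0)
    (htr : A.trace = 0)
    (htr2 : (A * A).trace = (Fintype.card V : ℝ) * K) :
    ∑ i, |hA.eigenvalues i| =
      (Fintype.card V : ℝ) *
        ((K + (K - 2 * c) / t) / (K * K + K - c) * (K - c) + 2 * c / t) := by
  have ht0 : t ≠ 0 := by linarith
  set α : ℝ := (K + (K - 2 * c) / t) / (K * K + K - c) with hα
  have habs : ∀ i, |hA.eigenvalues i| =
      α * (hA.eigenvalues i * hA.eigenvalues i + hA.eigenvalues i - c)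
        + (-1 / t) * hA.eigenvalues i + 2 * c / t := by
    intro i
    set μ := hA.eigenvalues i with hμ
    rcases mul_eq_zero.mp (eig_root hA hcubic i) with h1 | h2
    · have hμK : μ = K := by linarith [sub_eq_zero.mp h1]
      rw [hμK, abs_of_nonneg hK, hα]
      rw [div_mul_cancel₀ _ hD]
      field_simp
      ring
    · -- μ is a root of the quadratic
      have hfac' : (μ - (t - 1) / 2) * (μ + (t + 1) / 2) = 0 := by
        linear_combination h2 - (1 / 4 : ℝ) * ht
      rcases mul_eq_zero.mp hfac' with h3 | h3
      · have hμr : μ = (t - 1) / 2 := by linarith [sub_eq_zero.mp h3]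
        have hr0 : (0 : ℝ) ≤ (t - 1) / 2 := by linarith
        have hq1 : (t - 1) / 2 * ((t - 1) / 2) + (t - 1) / 2 - c = 0 := by
          linear_combination (1 / 4 : ℝ) * ht
        rw [hμr, abs_of_nonneg hr0, hq1, mul_zero, zero_add]
        field_simp
        linear_combination ht
      · have hμs : μ = -((t + 1) / 2) := by linarith
        have hs0 : -((t + 1) / 2) ≤ (0 : ℝ) := by linarith
        rw [hμs, abs_of_nonpos hs0]
        have hq : (-((t + 1) / 2)) * (-((t + 1) / 2)) + (-((t + 1) / 2)) - c = 0 := by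
          linear_combination (1 / 4 : ℝ) * ht
        rw [hq, mul_zero, zero_add]
        field_simp
        linear_combination ht
  calc ∑ i, |hA.eigenvalues i|
      = ∑ i, (α * (hA.eigenvalues i * hA.eigenvalues i + hA.eigenvalues i - c)
          + (-1 / t) * hA.eigenvalues i + 2 * c / t) := Finset.sum_congr rfl fun i _ => habs i
    _ = α * ((∑ i, hA.eigenvalues i * hA.eigenvalues i) + (∑ i, hA.eigenvalues i)
          - (Fintype.card V : ℝ) * c)
          + (-1 / t) * (∑ i, hA.eigenvalues i) + (Fintype.card V : ℝ) * (2 * c / t) := by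
        rw [Finset.sum_add_distrib, Finset.sum_add_distrib, ← Finset.mul_sum, ← Finset.mul_sum,
          Finset.sum_sub_distrib, Finset.sum_add_distrib, Finset.sum_const, Finset.sum_const,
          Finset.card_univ, nsmul_eq_mul, nsmul_eq_mul]
    _ = _ := by
        rw [sum_eig hA, sum_eig_sq hA, htr, htr2, hα]
        ring

lemma adjMatrix_one_add {V : Type*} [Fintype V] [DecidableEq V] (G : SimpleGraph V)
    [DecidableRel G.Adj] :
    (1 : Matrix V V ℝ) + G.adjMatrix ℝ + Gᶜ.adjMatrix ℝ = Matrix.of fun _ _ => (1 : ℝ) := by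
  ext i j
  by_cases h1 : i = j
  · subst h1
    simp [SimpleGraph.adjMatrix_apply, Matrix.one_apply, SimpleGraph.compl_adj]
  · by_cases h2 : G.Adj i j <;>
      simp [SimpleGraph.adjMatrix_apply, Matrix.one_apply, h1, h2, SimpleGraph.compl_adj]

lemma adj_mul_allOnes {V : Type*} [Fintype V] [DecidableEq V] {H : SimpleGraph V}
    [DecidableRel H.Adj] {d : ℕ} (hreg : H.IsRegularOfDegree d) :
    H.adjMatrix ℝ * Matrix.of (fun _ _ => (1 : ℝ)) = (d : ℝ) • Matrix.of (fun _ _ => (1 : ℝ)) := by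
  ext i j
  simp [SimpleGraph.adjMatrix_mul_apply, SimpleGraph.card_neighborFinset_eq_degree, hreg i]

lemma trace_sq_reg {V : Type*} [Fintype V] [DecidableEq V] {H : SimpleGraph V}
    [DecidableRel H.Adj] {d : ℕ} (hreg : H.IsRegularOfDegree d) :
    (H.adjMatrix ℝ * H.adjMatrix ℝ).trace = (Fintype.card V : ℝ) * d := by
  rw [Matrix.trace]
  have : ∀ i, (H.adjMatrix ℝ * H.adjMatrix ℝ).diag i = (d : ℝ) := by
    intro i
    rw [Matrix.diag_apply, SimpleGraph.adjMatrix_mul_self_apply_self, hreg i]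
  rw [Finset.sum_congr rfl fun i _ => this i, Finset.sum_const, Finset.card_univ,
    nsmul_eq_mul]

lemma cubic_of_srg {V : Type*} [Fintype V] [DecidableEq V] {G : SimpleGraph V}
    [DecidableRel G.Adj] {n k : ℕ} (h : G.IsSRGWith n k 0 1) :
    (G.adjMatrix ℝ - (k : ℝ) • 1) *
      (G.adjMatrix ℝ * G.adjMatrix ℝ + G.adjMatrix ℝ - ((k : ℝ) - 1) • 1) = 0 := by
  have hm := h.matrix_eq (α := ℝ)
  rw [pow_two] at hm
  have hA2 : G.adjMatrix ℝ * G.adjMatrix ℝ = (k : ℝ) • 1 + Gᶜ.adjMatrix ℝ := by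
    rw [hm]
    simp [Nat.cast_smul_eq_nsmul]
  have e1 : G.adjMatrix ℝ * G.adjMatrix ℝ + G.adjMatrix ℝ - ((k : ℝ) - 1) • 1
      = Matrix.of fun _ _ => (1 : ℝ) := by
    rw [hA2, ← adjMatrix_one_add G]
    module
  have hbJ : (G.adjMatrix ℝ - (k : ℝ) • 1) * Matrix.of (fun _ _ => (1 : ℝ)) = 0 := by
    rw [sub_mul, adj_mul_allOnes h.regular, Matrix.smul_mul, one_mul, sub_self]
  rw [e1, hbJ]

lemma cubic_of_srg_compl {V : Type*} [Fintype V] [DecidableEq V] {G : SimpleGraph V}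
    [DecidableRel G.Adj] {n k : ℕ} (h : G.IsSRGWith n k 0 1) (hk : 2 ≤ k)
    (hn : n = k ^ 2 + 1) :
    (Gᶜ.adjMatrix ℝ - ((k : ℝ) * (k : ℝ) - (k : ℝ)) • 1) *
      (Gᶜ.adjMatrix ℝ * Gᶜ.adjMatrix ℝ + Gᶜ.adjMatrix ℝ - ((k : ℝ) - 1) • 1) = 0 := by
  have h' := h.compl
  have hq : k ^ 2 = k * k := by ring
  have h2k : 2 * k ≤ k * k := Nat.mul_le_mul_right k hk
  have hK' : n - k - 1 = k * k - k := by rw [hn, hq]; omega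
  have hL' : n - (2 * k - 1) - 2 = k * k - 2 * k := by rw [hn, hq]; omega
  have hM' : n - (2 * k - 0) = k * k - 2 * k + 1 := by rw [hn, hq]; omega
  rw [hK', hL', hM'] at h'
  have hm := h'.matrix_eq (α := ℝ)
  rw [pow_two] at hm
  have hcc : (Gᶜᶜ).adjMatrix ℝ = G.adjMatrix ℝ := by
    ext i j
    by_cases h2 : G.Adj i j <;> simp [SimpleGraph.adjMatrix_apply, compl_compl, h2]
  rw [hcc] at hm
  have hkk : k ≤ k * k := Nat.le_mul_of_pos_left k (by omega)
  have hcast1 : ((k * k - k : ℕ) : ℝ) = (k : ℝ) * (k : ℝ) - (k : ℝ) := by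
    rw [Nat.cast_sub hkk]; push_cast; ring
  have hcast2 : ((k * k - 2 * k : ℕ) : ℝ) = (k : ℝ) * (k : ℝ) - 2 * (k : ℝ) := by
    rw [Nat.cast_sub h2k]; push_cast; ring
  have hB2 : Gᶜ.adjMatrix ℝ * Gᶜ.adjMatrix ℝ
      = ((k : ℝ) * (k : ℝ) - (k : ℝ)) • 1
        + ((k : ℝ) * (k : ℝ) - 2 * (k : ℝ)) • Gᶜ.adjMatrix ℝ
        + ((k : ℝ) * (k : ℝ) - 2 * (k : ℝ) + 1) • G.adjMatrix ℝ := by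
    rw [hm]
    rw [← Nat.cast_smul_eq_nsmul ℝ, ← Nat.cast_smul_eq_nsmul ℝ, ← Nat.cast_smul_eq_nsmul ℝ,
      hcast1, hcast2]
    congr 1
    rw [Nat.cast_add, Nat.cast_one, hcast2]
  have e1 : Gᶜ.adjMatrix ℝ * Gᶜ.adjMatrix ℝ + Gᶜ.adjMatrix ℝ - ((k : ℝ) - 1) • 1
      = (((k : ℝ) - 1) ^ 2) • Matrix.of fun _ _ => (1 : ℝ) := by
    rw [hB2, ← adjMatrix_one_add G]
    module
  have hreg' : Gᶜ.IsRegularOfDegree (k * k - k) := by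
    have := h'.regular
    exact this
  have hbJ : (Gᶜ.adjMatrix ℝ - ((k : ℝ) * (k : ℝ) - (k : ℝ)) • 1)
      * Matrix.of (fun _ _ => (1 : ℝ)) = 0 := by
    rw [sub_mul, adj_mul_allOnes hreg', hcast1, Matrix.smul_mul, one_mul, sub_self]
  rw [e1, Matrix.mul_smul, hbJ, smul_zero]

lemma compl_adjMatrix_eq_zero {V : Type*} [Fintype V] [DecidableEq V] {G : SimpleGraph V}
    [DecidableRel G.Adj] {n : ℕ} (h : G.IsSRGWith n 1 0 1) (hn2 : n = 2)
    (instC : DecidableRel Gᶜ.Adj) :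
    @SimpleGraph.adjMatrix ℝ V Gᶜ instC _ _ = 0 := by
  have hcard : Fintype.card V = 2 := by rw [h.card, hn2]
  have hadj : ∀ v w : V, v ≠ w → G.Adj v w := by
    intro v w hvw
    have hd := h.regular v
    rw [← SimpleGraph.card_neighborFinset_eq_degree] at hd
    obtain ⟨u, hu⟩ : (G.neighborFinset v).Nonempty := by
      rw [← Finset.card_pos, hd]; omega
    rw [SimpleGraph.mem_neighborFinset] at hu
    have hvu : v ≠ u := hu.ne
    by_cases huw : u = w
    · subst huw; exact hu
    · exfalso
      have hc3 : ({v, u, w} : Finset V).card = 3 := by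
        rw [Finset.card_insert_of_notMem (by simp [hvu, hvw]),
          Finset.card_insert_of_notMem (by simp [huw]), Finset.card_singleton]
      have hle := Finset.card_le_card (Finset.subset_univ ({v, u, w} : Finset V))
      rw [Finset.card_univ, hcard] at hle
      omega
  ext i j
  simp only [SimpleGraph.adjMatrix_apply, Matrix.zero_apply, ite_eq_right_iff]
  intro hc
  rw [SimpleGraph.compl_adj] at hc
  exact (hc.2 (hadj i j hc.1)).elim

/-- Bridging: `energy` computed with an arbitrary decidability instance. -/
lemma energy_eq_sum_abs {V : Type*} [Fintype V] [DecidableEq V] (H : SimpleGraph V)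
    [instH : DecidableRel H.Adj] :
    energy H = ∑ i, |(adjMatrix_isHermitian H).eigenvalues i| := by
  unfold energy adjEig
  refine Finset.sum_congr rfl fun i _ => ?_
  congr 1
  exact congrFun (eigen_congr _ _
    (congrArg (fun inst => @SimpleGraph.adjMatrix ℝ V H inst _ _) (Subsingleton.elim _ _))) i

end Aux

set_option maxHeartbeats 1600000 in
/-- A strongly regular Moore graph `srg(n,k,0,1)` with `n ≥ 2` is
equienergetic with its complement iff it is the pentagon, i.e. `n = 5` and `k = 2`. -/
theorem moore_graph_equienergetic_iff {V : Type*} [Fintype V] [DecidableEq V]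
    (G : SimpleGraph V) [DecidableRel G.Adj] (n k : ℕ)
    (h : G.IsSRGWith n k 0 1) (hn : 2 ≤ n) :
    energy G = energy Gᶜ ↔ (n = 5 ∧ k = 2) := by
  classical
  have hcard := h.card
  -- `k ≥ 1`
  have hk1 : 1 ≤ k := by
    by_contra hk0
    push_neg at hk0
    have hk : k = 0 := by omega
    obtain ⟨v, w, hvw⟩ := Fintype.exists_pair_of_one_lt_card (by rw [hcard]; omega)
    have hdeg : (G.neighborFinset v).card = 0 := by
      rw [SimpleGraph.card_neighborFinset_eq_degree, h.regular v, hk]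
    have hnadj : ¬ G.Adj v w := by
      intro hadj
      have hmem : w ∈ G.neighborFinset v := by rwa [SimpleGraph.mem_neighborFinset]
      have := Finset.card_pos.mpr ⟨w, hmem⟩
      omega
    have h1 := h.of_not_adj hvw hnadj
    have hne : Nonempty (G.commonNeighbors v w) := by
      rw [← Fintype.card_pos_iff, h1]; omega
    obtain ⟨⟨u, hu⟩⟩ := hne
    rw [SimpleGraph.mem_commonNeighbors] at hu
    have hmem : u ∈ G.neighborFinset v := by
      rw [SimpleGraph.mem_neighborFinset]; exact hu.1
    have := Finset.card_pos.mpr ⟨u, hmem⟩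
    omega
  -- `k < n`
  have hkn : k < n := by
    obtain ⟨v⟩ : Nonempty V := by rw [← Fintype.card_pos_iff, hcard]; omega
    have hlt := G.degree_lt_card_verts v
    rwa [h.regular v, hcard] at hlt
  -- `n = k ^ 2 + 1`
  have hpar := SimpleGraph.IsSRGWith.param_eq G h (by omega)
  have hpar' : k * (k - 1) = n - k - 1 := by simpa using hpar
  have h2 : n = k * (k - 1) + k + 1 := by omega
  have hn_eq : n = k ^ 2 + 1 := by
    obtain ⟨m, rfl⟩ : ∃ m, k = m + 1 := ⟨k - 1, by omega⟩
    rw [h2, Nat.add_sub_cancel]; ring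
  -- basic real facts
  have hk1R : (1 : ℝ) ≤ (k : ℝ) := by exact_mod_cast hk1
  set t : ℝ := Real.sqrt (4 * (k : ℝ) - 3) with htdef
  have htsq : t * t = 4 * ((k : ℝ) - 1) + 1 := by
    rw [htdef, Real.mul_self_sqrt (by linarith)]; ring
  have ht1 : 1 ≤ t := by rw [htdef, Real.one_le_sqrt]; linarith
  have ht0 : t ≠ 0 := by linarith
  have hNcast : ((Fintype.card V : ℝ)) = (k : ℝ) ^ 2 + 1 := by
    rw [hcard, hn_eq]; push_cast; ring
  -- energy of `G`
  have hEG : energy G = (k : ℝ) + (k : ℝ) * (2 * (k : ℝ) ^ 2 - 2 * (k : ℝ) + 1) / t := by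
    rw [energy_eq_sum_abs G,
      sum_abs_eig (adjMatrix_isHermitian G) (K := (k : ℝ)) (c := (k : ℝ) - 1) (t := t)
        (by linarith) htsq ht1 (by linarith)
        (by nlinarith [sq_nonneg ((k : ℝ))])
        (cubic_of_srg h) (by simp) (trace_sq_reg h.regular), hNcast]
    have hD : (k : ℝ) * (k : ℝ) + (k : ℝ) - ((k : ℝ) - 1) ≠ 0 := by nlinarith [sq_nonneg ((k : ℝ))]
    have hD2 : (k : ℝ) * ((k : ℝ) + 1) - ((k : ℝ) - 1) ≠ 0 := by
      contrapose! hD; linear_combination hD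
    field_simp
    ring
  rcases eq_or_lt_of_le hk1 with hk1' | hk2
  · -- the degenerate case `k = 1`, `n = 2`
    have hk : k = 1 := hk1'.symm
    have hn2 : n = 2 := by rw [hn_eq, hk]; norm_num
    have hEC : energy Gᶜ = 0 := by
      rw [energy_eq_sum_abs Gᶜ]
      have hB0 : Gᶜ.adjMatrix ℝ = 0 := compl_adjMatrix_eq_zero (hk ▸ h) hn2 _
      simp [eig_zero _ hB0]
    rw [hEG, hEC, hk]
    constructor
    · intro habs
      exfalso
      norm_num at habs
      have htpos : (0 : ℝ) < t := by linarith
      have : (0 : ℝ) < t⁻¹ := by positivity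
      linarith
    · rintro ⟨-, hk2'⟩
      exact absurd hk2' (by norm_num)
  · -- the main case `k ≥ 2`
    have hk2' : 2 ≤ k := hk2
    have hk2R : (2 : ℝ) ≤ (k : ℝ) := by exact_mod_cast hk2'
    have hkk : k ≤ k * k := Nat.le_mul_of_pos_left k (by omega)
    have hregC : Gᶜ.IsRegularOfDegree (k * k - k) := by
      have hK' : n - k - 1 = k * k - k := by
        rw [hn_eq, show k ^ 2 = k * k from by ring]; omega
      exact hK' ▸ h.compl.regular
    have hcast1 : ((k * k - k : ℕ) : ℝ) = (k : ℝ) * (k : ℝ) - (k : ℝ) := by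
      rw [Nat.cast_sub hkk]; push_cast; ring
    have hD' : ((k : ℝ) * (k : ℝ) - (k : ℝ)) * ((k : ℝ) * (k : ℝ) - (k : ℝ))
        + ((k : ℝ) * (k : ℝ) - (k : ℝ)) - ((k : ℝ) - 1) ≠ 0 := by
      have key : ((k : ℝ) * (k : ℝ) - (k : ℝ)) * ((k : ℝ) * (k : ℝ) - (k : ℝ))
          + ((k : ℝ) * (k : ℝ) - (k : ℝ)) - ((k : ℝ) - 1)
          = ((k : ℝ) - 1) ^ 2 * ((k : ℝ) ^ 2 + 1) := by ring
      rw [key]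
      have h1 : (1 : ℝ) ≤ ((k : ℝ) - 1) ^ 2 := by nlinarith
      nlinarith [sq_nonneg ((k : ℝ))]
    have hEC : energy Gᶜ
        = (k : ℝ) ^ 2 - (k : ℝ) + (k : ℝ) * (2 * (k : ℝ) ^ 2 - (k : ℝ) - 1) / t := by
      rw [energy_eq_sum_abs Gᶜ,
        sum_abs_eig (adjMatrix_isHermitian Gᶜ) (K := (k : ℝ) * (k : ℝ) - (k : ℝ))
          (c := (k : ℝ) - 1) (t := t)
          (by linarith) htsq ht1 (by nlinarith) hD'
          (cubic_of_srg_compl h hk2' hn_eq) (by simp)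
          (by rw [trace_sq_reg hregC, hcast1]), hNcast]
      have hD2 : (k : ℝ) * ((k : ℝ) * ((k : ℝ) - 1) + 1) - 1 ≠ 0 := by
        contrapose! hD'; linear_combination ((k : ℝ) - 1) * hD'
      field_simp
      ring
    rw [hEG, hEC]
    constructor
    · intro heq
      have hp : (k : ℝ) * ((k : ℝ) - 2) * (t + 1) = 0 := by
        field_simp at heq
        linear_combination (-(k : ℝ)) * heq
      have hkeq : (k : ℝ) = 2 := by
        rcases mul_eq_zero.mp hp with h' | h'
        · rcases mul_eq_zero.mp h' with h'' | h''
          · linarith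
          · linarith
        · linarith
      have hk2'' : k = 2 := by exact_mod_cast hkeq
      exact ⟨by rw [hn_eq, hk2'']; norm_num, hk2''⟩
    · rintro ⟨-, hk2''⟩
      rw [hk2'']
      norm_num
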